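/- Let L ≥ 2, m ≥ 1, and r be integers with 1 ≤ r ≤ m, set N = 2^L·m, and let n_b^(2), …, n_b^(L) and n_b^(ad) be nonnegative integers all bounded by a nonnegative integer n_b. Then the total number of weight parameters of the neural-network representation of an H-matrix, N_p^H = Σ_{ℓ=2}^{L} ( N·r + 2^ℓ·r²·(2·n_b^(ℓ)+1) + 2^ℓ·r·(N/2^ℓ) ) + 2^L·m²·(2·n_b^(ad)+1), satisfies N_p^H ≤ 2·L·N·r + 2^{L+1}·r²·(2·n_b+1) + N·m·(2·n_b^(ad)+1) ≤ 2·N·log₂(N)·r + 3·N·m·(2·n_b+1). -/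

import Mathlib

lemma two_pow_sum_le (n : ℕ) : ∑ i ∈ Finset.range n, 2 ^ i ≤ 2 ^ n := by
  induction n with
  | zero => simp
  | succ k ih =>
    rw [Finset.sum_range_succ]
    have : 2 ^ (k + 1) = 2 ^ k + 2 ^ k := by ring
    omega

/-- Parameter count of the neural-network representation of an `H`-matrix:
`N_p^H = Σ_{ℓ=2}^{L} (N·r + 2^ℓ·r²·(2n_b^(ℓ)+1) + 2^ℓ·r·(N/2^ℓ)) + 2^L·m²·(2n_b^(ad)+1)`
satisfies
`N_p^H ≤ 2LNr + 2^{L+1}r²(2n_b+1) + Nm(2n_b^(ad)+1) ≤ 2N·log₂(N)·r + 3Nm(2n_b+1)`. -/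
theorem stmt_8 (L m r : ℕ) (hL : 2 ≤ L) (hm : 1 ≤ m) (hr : 1 ≤ r) (hrm : r ≤ m)
    (N : ℕ) (hN : N = 2 ^ L * m)
    (nb : ℕ → ℕ) (nbad nbmax : ℕ)
    (hnb : ∀ l, 2 ≤ l → l ≤ L → nb l ≤ nbmax) (hnbad : nbad ≤ nbmax)
    (Np : ℕ)
    (hNp : Np = (∑ l ∈ Finset.Icc 2 L,
        (N * r + 2 ^ l * r ^ 2 * (2 * nb l + 1) + 2 ^ l * r * (N / 2 ^ l)))
      + 2 ^ L * m ^ 2 * (2 * nbad + 1)) :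
    Np ≤ 2 * L * N * r + 2 ^ (L + 1) * r ^ 2 * (2 * nbmax + 1) + N * m * (2 * nbad + 1) ∧
    ((2 * L * N * r + 2 ^ (L + 1) * r ^ 2 * (2 * nbmax + 1) + N * m * (2 * nbad + 1) : ℝ)
      ≤ 2 * N * Real.logb 2 N * r + 3 * N * m * (2 * nbmax + 1)) := by
  constructor
  · subst hNp
    have hadj : 2 ^ L * m ^ 2 * (2 * nbad + 1) = N * m * (2 * nbad + 1) := by
      subst hN; ring
    rw [hadj]
    apply Nat.add_le_add_right
    have hsum : (∑ l ∈ Finset.Icc 2 L,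
        (N * r + 2 ^ l * r ^ 2 * (2 * nb l + 1) + 2 ^ l * r * (N / 2 ^ l)))
        ≤ ∑ l ∈ Finset.Icc 2 L, (2 * (N * r) + 2 ^ l * (r ^ 2 * (2 * nbmax + 1))) := by
      apply Finset.sum_le_sum
      intro l hl
      simp only [Finset.mem_Icc] at hl
      have h1 : 2 ^ l * r * (N / 2 ^ l) ≤ N * r := by
        calc 2 ^ l * r * (N / 2 ^ l) = N / 2 ^ l * 2 ^ l * r := by ring
          _ ≤ N * r := Nat.mul_le_mul_right r (Nat.div_mul_le_self N _)
      have h2 : 2 ^ l * r ^ 2 * (2 * nb l + 1) ≤ 2 ^ l * (r ^ 2 * (2 * nbmax + 1)) := by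
        have := hnb l hl.1 hl.2
        have : 2 * nb l + 1 ≤ 2 * nbmax + 1 := by omega
        calc 2 ^ l * r ^ 2 * (2 * nb l + 1) ≤ 2 ^ l * r ^ 2 * (2 * nbmax + 1) :=
              Nat.mul_le_mul_left _ this
          _ = 2 ^ l * (r ^ 2 * (2 * nbmax + 1)) := by ring
      have := Nat.le_refl (N * r)
      calc N * r + 2 ^ l * r ^ 2 * (2 * nb l + 1) + 2 ^ l * r * (N / 2 ^ l)
          ≤ N * r + 2 ^ l * (r ^ 2 * (2 * nbmax + 1)) + N * r :=
            Nat.add_le_add (Nat.add_le_add_left h2 _) h1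
        _ = 2 * (N * r) + 2 ^ l * (r ^ 2 * (2 * nbmax + 1)) := by ring
    refine hsum.trans ?_
    rw [Finset.sum_add_distrib, Finset.sum_const, ← Finset.sum_mul]
    have hcard : (Finset.Icc 2 L).card = L - 1 := by
      rw [Nat.card_Icc]; omega
    have hpow : (∑ l ∈ Finset.Icc 2 L, 2 ^ l) ≤ 2 ^ (L + 1) := by
      calc (∑ l ∈ Finset.Icc 2 L, 2 ^ l) ≤ ∑ l ∈ Finset.range (L + 1), 2 ^ l := by
            apply Finset.sum_le_sum_of_subset
            intro x hx
            simp only [Finset.mem_Icc] at hx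
            simp [Finset.mem_range]; omega
        _ ≤ 2 ^ (L + 1) := two_pow_sum_le _
    rw [hcard]
    have h3 : (L - 1) • (2 * (N * r)) ≤ 2 * L * N * r := by
      rw [smul_eq_mul]
      calc (L - 1) * (2 * (N * r)) ≤ L * (2 * (N * r)) :=
            Nat.mul_le_mul_right _ (Nat.sub_le L 1)
        _ = 2 * L * N * r := by ring
    have h4 : (∑ l ∈ Finset.Icc 2 L, 2 ^ l) * (r ^ 2 * (2 * nbmax + 1))
        ≤ 2 ^ (L + 1) * r ^ 2 * (2 * nbmax + 1) := by
      calc (∑ l ∈ Finset.Icc 2 L, 2 ^ l) * (r ^ 2 * (2 * nbmax + 1))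
          ≤ 2 ^ (L + 1) * (r ^ 2 * (2 * nbmax + 1)) := Nat.mul_le_mul_right _ hpow
        _ = 2 ^ (L + 1) * r ^ 2 * (2 * nbmax + 1) := by ring
    exact Nat.add_le_add h3 h4
  · have hNpos : (1:ℕ) ≤ N := by
      subst hN; exact Nat.one_le_iff_ne_zero.mpr (by positivity)
    have hlog : (L : ℝ) ≤ Real.logb 2 N := by
      have h2L : (2:ℝ) ^ L ≤ N := by
        rw [hN]; push_cast
        nlinarith [pow_pos (by norm_num : (0:ℝ) < 2) L, (by exact_mod_cast hm : (1:ℝ) ≤ m)]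
      calc (L : ℝ) = Real.logb 2 ((2:ℝ) ^ L) := by
            rw [Real.logb_pow, Real.logb_self_eq_one] <;> norm_num
        _ ≤ Real.logb 2 N := by
            exact Real.logb_le_logb_of_le (by norm_num) (by positivity) h2L
    have hNr : (N : ℝ) = 2 ^ L * m := by rw [hN]; push_cast; ring
    have hrm' : (r:ℝ) ≤ m := by exact_mod_cast hrm
    have hr' : (1:ℝ) ≤ r := by exact_mod_cast hr
    have hnbad' : (nbad:ℝ) ≤ nbmax := by exact_mod_cast hnbad
    have hNpos' : (0:ℝ) < N := by exact_mod_cast hNpos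
    have hpowpos : (0:ℝ) < 2 ^ L := by positivity
    have ha : 2 * (L:ℝ) * N * r ≤ 2 * N * Real.logb 2 N * r := by
      have := mul_le_mul_of_nonneg_right hlog (by positivity : (0:ℝ) ≤ 2 * N * r)
      nlinarith
    have hb : (2:ℝ) ^ (L + 1) * r ^ 2 * (2 * nbmax + 1) ≤ 2 * N * m * (2 * nbmax + 1) := by
      have hrr : (r:ℝ) * r ≤ m * m :=
        mul_le_mul hrm' hrm' (by linarith) (by linarith)
      have h1 : (2:ℝ) ^ (L + 1) * r ^ 2 ≤ 2 * N * m := by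
        rw [hNr, pow_succ]
        nlinarith
      nlinarith [h1, (by positivity : (0:ℝ) ≤ 2 * (nbmax:ℝ) + 1)]
    have hc : (N:ℝ) * m * (2 * nbad + 1) ≤ N * m * (2 * nbmax + 1) := by
      have hm' : (1:ℝ) ≤ m := by exact_mod_cast hm
      have : (0:ℝ) ≤ (N:ℝ) * m := by positivity
      nlinarith
    linarith
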